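/- For t < 29/12, the polynomial F(x,y,t) = 2(x⁴+y⁴) + (8/3)(x³+y³) + 4x²y² + 20 − 8t is strictly positive for all real (x,y), while for t = 29/12 there exists a point where F vanishes. -/
import Mathlib


/-- F(x,y,t) = 2(x⁴+y⁴) + (8/3)(x³+y³) + 4x²y² + 20 − 8t -/
noncomputable def Fnv (t x y : ℝ) : ℝ :=
  2*(x^4+y^4) + (8/3)*(x^3+y^3) + 4*x^2*y^2 + 20 - 8*t

theorem Fnv_positivity :
    (∀ t : ℝ, t < 29/12 → ∀ x y : ℝ, 0 < Fnv t x y) ∧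
    (∃ x y : ℝ, Fnv (29/12) x y = 0) := by
  constructor
  · intro t ht x y
    unfold Fnv
    nlinarith [sq_nonneg (x^2+x), sq_nonneg (y^2+y), sq_nonneg (x^2+y^2-1), sq_nonneg (x*y)]
  · exact ⟨-1, 0, by norm_num [Fnv]⟩
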